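/- Let Ω ⊂ ℝ^d be bounded measurable and (vₙ) ⊂ L¹(Ω) a sequence of nonnegative functions with biting limit v ∈ L¹(Ω) (i.e. there are measurable sets E_j ⊆ Ω, nonincreasing, |E_j| → 0, with vₙ ⇀ v weakly in L¹(Ω∖E_j) for each j). If ∫_Ω (vₙ − v) dx → 0, then vₙ ⇀ v weakly in L¹(Ω). -/

import Mathlib

open MeasureTheory Filter Topology

/-- Biting-limit upgrade (Gwiazda–Málek–Świerczewska): if nonnegative `vₙ` converge to `v`
weakly in `L¹(Ω∖E_j)` for sets `E_j` with `|E_j| → 0`, and `∫_Ω (vₙ − v) → 0`, then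
`vₙ ⇀ v` weakly in `L¹(Ω)`. -/
theorem biting_to_weak_L1 (d : ℕ) (Ω : Set (Fin d → ℝ))
    (hΩm : MeasurableSet Ω) (hΩb : Bornology.IsBounded Ω)
    (v : ℕ → (Fin d → ℝ) → ℝ) (vl : (Fin d → ℝ) → ℝ)
    (hvint : ∀ n, IntegrableOn (v n) Ω) (hvlint : IntegrableOn vl Ω)
    (hnn : ∀ n x, 0 ≤ v n x)
    (E : ℕ → Set (Fin d → ℝ)) (hEm : ∀ j, MeasurableSet (E j)) (hEsub : ∀ j, E j ⊆ Ω)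
    (hEanti : Antitone E)
    (hEvol : Tendsto (fun j => volume (E j)) atTop (𝓝 0))
    (hbite : ∀ j, ∀ φ : (Fin d → ℝ) → ℝ, Measurable φ → (∃ C, ∀ x, |φ x| ≤ C) →
        Tendsto (fun n => ∫ x in Ω \ E j, v n x * φ x) atTop
          (𝓝 (∫ x in Ω \ E j, vl x * φ x)))
    (hint : Tendsto (fun n => ∫ x in Ω, (v n x - vl x)) atTop (𝓝 0)) :
    ∀ φ : (Fin d → ℝ) → ℝ, Measurable φ → (∃ C, ∀ x, |φ x| ≤ C) →
      Tendsto (fun n => ∫ x in Ω, v n x * φ x) atTop (𝓝 (∫ x in Ω, vl x * φ x)) := by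
  intro φ hφm hφb
  obtain ⟨C, hC⟩ := hφb
  have hC0 : 0 ≤ C := le_trans (abs_nonneg _) (hC 0)
  -- integrability of products
  have hmul : ∀ (f : (Fin d → ℝ) → ℝ), IntegrableOn f Ω →
      IntegrableOn (fun x => f x * φ x) Ω := by
    intro f hf
    have := hf.bdd_mul hφm.aestronglyMeasurable (c := C) (ae_of_all _ fun x => by simpa using hC x)
    exact this.congr (Eventually.of_forall fun x => mul_comm _ _)
  have hvmul : ∀ n, IntegrableOn (fun x => v n x * φ x) Ω := fun n => hmul _ (hvint n)
  have hvlmul : IntegrableOn (fun x => vl x * φ x) Ω := hmul _ hvlint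
  -- absolute continuity: ∫_{E j} |vl| → 0
  have habs : Tendsto (fun j => ∫ x in E j, |vl x|) atTop (𝓝 0) := by
    have hres : ∀ j, ∫ x in E j, |vl x| = ∫ x in E j, |vl x| ∂(volume.restrict Ω) := by
      intro j
      rw [Measure.restrict_restrict (hEm j), Set.inter_eq_self_of_subset_left (hEsub j)]
    simp only [hres]
    apply hvlint.abs.tendsto_setIntegral_nhds_zero
    have : ∀ j, (volume.restrict Ω) (E j) ≤ volume (E j) := fun j =>
      Measure.restrict_apply_le _ _
    exact tendsto_of_tendsto_of_tendsto_of_le_of_le tendsto_const_nhds hEvol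
      (fun j => zero_le) this
  -- total masses converge
  have hmass : Tendsto (fun n => ∫ x in Ω, v n x) atTop (𝓝 (∫ x in Ω, vl x)) := by
    have : ∀ n, ∫ x in Ω, (v n x - vl x) = (∫ x in Ω, v n x) - ∫ x in Ω, vl x :=
      fun n => integral_sub (hvint n) hvlint
    simp only [this] at hint
    have := hint.add_const (∫ x in Ω, vl x)
    simpa using this
  rw [Metric.tendsto_atTop]
  intro ε hε
  rw [← eventually_atTop]
  set δ := ε / (4 * (C + 1)) with hδdef
  have hδ : 0 < δ := by positivity
  -- choose j with ∫_{E j} |vl| < δ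
  obtain ⟨j, hj⟩ := (habs.eventually (gt_mem_nhds hδ)).exists
  -- mass on E j converges to ∫_{E j} vl
  have hmassj : Tendsto (fun n => ∫ x in E j, v n x) atTop (𝓝 (∫ x in E j, vl x)) := by
    have h1 := hbite j (fun _ => 1) measurable_const ⟨1, fun x => by norm_num⟩
    simp only [mul_one] at h1
    have h2 := hmass.sub h1
    have key : ∀ (f : (Fin d → ℝ) → ℝ), IntegrableOn f Ω →
        (∫ x in Ω, f x) - ∫ x in Ω \ E j, f x = ∫ x in E j, f x := by
      intro f hf
      rw [integral_diff (hEm j) hf (hEsub j)]; ring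
    rw [key vl hvlint] at h2
    refine h2.congr fun n => key (v n) (hvint n)
  have hEmass : ∀ᶠ n in atTop, ∫ x in E j, v n x < 2 * δ := by
    have hlt : (∫ x in E j, vl x) < δ := lt_of_le_of_lt
      (setIntegral_mono_on ((hvlint.mono_set (hEsub j)))
        ((IntegrableOn.mono_set hvlint.abs (hEsub j))) (hEm j) (fun x _ => le_abs_self _)) hj
    filter_upwards [hmassj.eventually (gt_mem_nhds (show (∫ x in E j, vl x) < 2*δ - δ + (∫ x in E j, vl x) by linarith))] with n hn
    linarith
  have hnear : ∀ᶠ n in atTop,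
      |(∫ x in Ω \ E j, v n x * φ x) - ∫ x in Ω \ E j, vl x * φ x| < δ := by
    have := (hbite j φ hφm ⟨C, hC⟩).sub_const (∫ x in Ω \ E j, vl x * φ x)
    simpa [Real.dist_eq, Metric.tendsto_atTop] using
      (this.eventually (Metric.ball_mem_nhds _ hδ)).mono (fun n hn => by
        simpa [Real.dist_eq] using hn)
  filter_upwards [hEmass, hnear] with n hEn hnn2
  rw [Real.dist_eq]
  -- split integrals
  have hsplit : ∀ (f : (Fin d → ℝ) → ℝ), IntegrableOn (fun x => f x * φ x) Ω →
      (∫ x in Ω, f x * φ x) = (∫ x in Ω \ E j, f x * φ x) + ∫ x in E j, f x * φ x := by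
    intro f hf
    rw [integral_diff (hEm j) hf (hEsub j)]; ring
  rw [hsplit (v n) (hvmul n), hsplit vl hvlmul]
  -- bound the E j pieces
  have hbd : ∀ (f : (Fin d → ℝ) → ℝ), IntegrableOn f (E j) → (∀ x, 0 ≤ f x) →
      |∫ x in E j, f x * φ x| ≤ C * ∫ x in E j, f x := by
    intro f hf hfnn
    calc |∫ x in E j, f x * φ x| ≤ ∫ x in E j, |f x * φ x| :=
          by
          simpa only [Real.norm_eq_abs] using
            norm_integral_le_integral_norm (μ := volume.restrict (E j))
              (fun x => f x * φ x)
      _ ≤ ∫ x in E j, C * f x := by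
          apply integral_mono_of_nonneg (Eventually.of_forall fun x => abs_nonneg _)
            (hf.const_mul C)
          refine Eventually.of_forall fun x => ?_
          dsimp only
          rw [abs_mul, abs_of_nonneg (hfnn x)]
          calc f x * |φ x| ≤ f x * C := mul_le_mul_of_nonneg_left (hC x) (hfnn x)
            _ = C * f x := mul_comm _ _
      _ = C * ∫ x in E j, f x := integral_const_mul _ _
  have hbd1 : |∫ x in E j, v n x * φ x| ≤ C * ∫ x in E j, v n x :=
    hbd (v n) ((hvint n).mono_set (hEsub j)) (hnn n)
  have hbd2 : |∫ x in E j, vl x * φ x| ≤ C * ∫ x in E j, |vl x| := by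
    calc |∫ x in E j, vl x * φ x| ≤ ∫ x in E j, |vl x * φ x| :=
          by
          simpa only [Real.norm_eq_abs] using
            norm_integral_le_integral_norm (μ := volume.restrict (E j))
              (fun x => vl x * φ x)
      _ ≤ ∫ x in E j, C * |vl x| := by
          apply integral_mono ((hvlmul.mono_set (hEsub j)).abs)
            ((IntegrableOn.mono_set hvlint.abs (hEsub j)).const_mul C)
          intro x
          dsimp only
          rw [abs_mul]
          calc |vl x| * |φ x| ≤ |vl x| * C :=
                mul_le_mul_of_nonneg_left (hC x) (abs_nonneg _)
            _ = C * |vl x| := mul_comm _ _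
      _ = C * ∫ x in E j, |vl x| := integral_const_mul _ _
  have h1 : C * (∫ x in E j, v n x) ≤ C * (2 * δ) :=
    mul_le_mul_of_nonneg_left hEn.le hC0
  have h2 : C * (∫ x in E j, |vl x|) ≤ C * δ := mul_le_mul_of_nonneg_left hj.le hC0
  have hεδ : ε = 4 * (C + 1) * δ := by
    rw [hδdef]; field_simp
  calc |((∫ x in Ω \ E j, v n x * φ x) + ∫ x in E j, v n x * φ x) -
        ((∫ x in Ω \ E j, vl x * φ x) + ∫ x in E j, vl x * φ x)|
      ≤ |(∫ x in Ω \ E j, v n x * φ x) - ∫ x in Ω \ E j, vl x * φ x| +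
        |∫ x in E j, v n x * φ x| + |∫ x in E j, vl x * φ x| := by
        have := abs_sub (∫ x in E j, v n x * φ x) (∫ x in E j, vl x * φ x)
        have h := abs_add_le ((∫ x in Ω \ E j, v n x * φ x) - ∫ x in Ω \ E j, vl x * φ x)
          ((∫ x in E j, v n x * φ x) - ∫ x in E j, vl x * φ x)
        have h2' := abs_sub (∫ x in E j, v n x * φ x) (∫ x in E j, vl x * φ x)
        calc _ = |((∫ x in Ω \ E j, v n x * φ x) - ∫ x in Ω \ E j, vl x * φ x) +
              ((∫ x in E j, v n x * φ x) - ∫ x in E j, vl x * φ x)| := by ring_nf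
          _ ≤ _ := by
              refine le_trans h ?_
              linarith [h2']
    _ < ε := by nlinarith [hbd1, hbd2]
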